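/- Let G = K_{n1,...,nk} be a complete k-partite graph with k ≥ 3 and n1 ≤ ... ≤ nk, and set s = n1 + ... + n_{k-1}, t = nk. If nk ≥ 2 and s > t, then rc(G) = 2. -/

import Mathlib

open SimpleGraph

/-- A graph `G` is rainbow connected under edge-coloring `c` if any two vertices are
joined by a path whose edges receive pairwise distinct colors. -/
def RainbowConnected {V : Type*} (G : SimpleGraph V) (c : Sym2 V → ℕ) : Prop :=
  ∀ u v : V, ∃ p : G.Walk u v, p.IsPath ∧ (p.edges.map c).Nodup

/-- The rainbow connection number: the least number of colors in an edge-coloring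
making `G` rainbow connected. -/
noncomputable def rc {V : Type*} [Fintype V] (G : SimpleGraph V) : ℕ :=
  sInf {n | ∃ c : Sym2 V → ℕ, (∀ e ∈ G.edgeSet, c e < n) ∧ RainbowConnected G c}

/-- Least `n` with `n ^ s ≥ t`, i.e. `⌈t^(1/s)⌉`. -/
noncomputable def ceilRoot (s t : ℕ) : ℕ := sInf {n | t ≤ n ^ s}

private lemma exists_block (f : ℕ → ℕ) : ∀ (N x : ℕ), x < ∑ j ∈ Finset.range N, f j →
    ∃ i < N, (∑ j ∈ Finset.range i, f j) ≤ x ∧ x < (∑ j ∈ Finset.range i, f j) + f i := by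
  intro N
  induction N with
  | zero => simp
  | succ N ih =>
    intro x hx
    by_cases h : x < ∑ j ∈ Finset.range N, f j
    · obtain ⟨i, hi, h1, h2⟩ := ih x h
      exact ⟨i, by omega, h1, h2⟩
    · rw [Finset.sum_range_succ] at hx
      exact ⟨N, by omega, by omega, by omega⟩

private lemma cover_aux (f : ℕ → ℕ) (N x t : ℕ) (hx : x < t)
    (ht : t ≤ ∑ j ∈ Finset.range N, f j) :
    ∃ i, ∃ _ : i < N, ∃ a, a < f i ∧
      min (∑ j ∈ Finset.range i, f j) (t - f i) + a = x := by
  obtain ⟨i, hi, h1, h2⟩ := exists_block f N x (lt_of_lt_of_le hx ht)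
  refine ⟨i, hi, x - min (∑ j ∈ Finset.range i, f j) (t - f i), ?_, ?_⟩ <;>
  · rcases Nat.le_total (∑ j ∈ Finset.range i, f j) (t - f i) with h | h
    · rw [min_eq_left h]; omega
    · rw [min_eq_right h]; omega

private lemma sum_range_pred (g : ℕ → ℕ) (k : ℕ) (h : 1 ≤ k) :
    ∑ j ∈ Finset.range k, g j = ∑ j ∈ Finset.range (k-1), g j + g (k-1) := by
  obtain ⟨m, rfl⟩ : ∃ m, k = m + 1 := ⟨k - 1, by omega⟩
  simp [Finset.sum_range_succ]

private def ff (k : ℕ) (n : Fin k → ℕ) : ℕ → ℕ := fun j => if h : j < k then n ⟨j, h⟩ else 0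

private def theta (k : ℕ) (n : Fin k → ℕ) (t : ℕ) (v : Σ i : Fin k, Fin (n i)) : ℕ :=
  min (∑ j ∈ Finset.range v.1.val, ff k n j) (t - n v.1) + v.2.val

private def emm (k : ℕ) (n : Fin k → ℕ) (t : ℕ) (w : Σ i : Fin k, Fin (n i)) (b : ℕ) : ℕ :=
  if b ≤ theta k n t w then 1 else 0

private def col (k : ℕ) (n : Fin k → ℕ) (t : ℕ) (K : Fin k) :
    Sym2 (Σ i : Fin k, Fin (n i)) → ℕ :=
  Sym2.lift ⟨fun u v =>
    if u.1 = K then (if v.1 = K then 0 else emm k n t v u.2.val)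
    else (if v.1 = K then emm k n t u v.2.val else 0),
   fun u v => by dsimp only; split_ifs <;> rfl⟩

private lemma col_mk (k : ℕ) (n : Fin k → ℕ) (t : ℕ) (K : Fin k)
    (u v : Σ i : Fin k, Fin (n i)) :
    col k n t K s(u,v) =
    if u.1 = K then (if v.1 = K then 0 else emm k n t v u.2.val)
    else (if v.1 = K then emm k n t u v.2.val else 0) := by
  simp [col]

private lemma two_path {V : Type*} {G : SimpleGraph V} (c : Sym2 V → ℕ) {u w v : V}
    (h1 : G.Adj u w) (h2 : G.Adj w v) (huv : u ≠ v) (hc : c s(u,w) ≠ c s(w,v)) :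
    ∃ p : G.Walk u v, p.IsPath ∧ (p.edges.map c).Nodup := by
  refine ⟨Walk.cons h1 (Walk.cons h2 Walk.nil), ?_, ?_⟩
  · simp [Walk.isPath_def, h1.ne, h2.ne, huv]
  · simp [hc]

private lemma first_two_edges {V : Type*} {G : SimpleGraph V} {u v : V} (p : G.Walk u v)
    (huv : u ≠ v) (hna : ¬ G.Adj u v) :
    ∃ (a b : V) (l : List (Sym2 V)), p.edges = s(u, a) :: s(a, b) :: l ∧
      G.Adj u a ∧ G.Adj a b := by
  cases p with
  | nil => exact absurd rfl huv
  | cons h q =>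
    cases q with
    | nil => exact absurd h hna
    | cons h2 r => exact ⟨_, _, r.edges, rfl, h, h2⟩

/-- complete k-partite graph, k ≥ 3, nk ≥ 2 and s > t implies rc = 2. -/
theorem rc_completeMultipartiteGraph_eq_two (k : ℕ) (hk : 3 ≤ k) (n : Fin k → ℕ)
    (hpos : ∀ i, 1 ≤ n i) (hmono : Monotone n)
    (ht : 2 ≤ n ⟨k - 1, by omega⟩)
    (hst : n ⟨k - 1, by omega⟩ < ∑ i ∈ Finset.univ.erase (⟨k - 1, by omega⟩ : Fin k), n i) :
    rc (completeMultipartiteGraph (fun i => Fin (n i))) = 2 := by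
  have hk1 : k - 1 < k := by omega
  set K : Fin k := ⟨k - 1, hk1⟩ with hK
  set G := completeMultipartiteGraph (fun i : Fin k => Fin (n i)) with hG
  set t : ℕ := n K with htdef
  have hadj : ∀ u v : Σ i : Fin k, Fin (n i), G.Adj u v ↔ u.1 ≠ v.1 := by
    intro u v
    simp [hG]
  -- sum facts
  have hsum1 : ∑ i ∈ Finset.univ.erase K, n i + t =
      ∑ j ∈ Finset.range k, ff k n j := by
    rw [Finset.sum_erase_add _ _ (Finset.mem_univ K)]
    rw [← Fin.sum_univ_eq_sum_range (fun j => ff k n j) k]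
    apply Finset.sum_congr rfl
    intro i _
    simp [ff]
  have hsum2 : ∑ j ∈ Finset.range k, ff k n j =
      ∑ j ∈ Finset.range (k - 1), ff k n j + t := by
    rw [sum_range_pred (fun j => ff k n j) k (by omega)]
    congr 1
    simp [ff, hK, htdef, hk1]
  have hs : t < ∑ j ∈ Finset.range (k - 1), ff k n j := by omega
  have n_le : ∀ i : Fin k, n i ≤ t := by
    intro i
    exact hmono (by rw [Fin.le_def]; simp [hK]; omega)
  have theta_lt : ∀ v : Σ i : Fin k, Fin (n i), theta k n t v < t := by
    intro v
    have h1 : min (∑ j ∈ Finset.range v.1.val, ff k n j) (t - n v.1) ≤ t - n v.1 :=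
      min_le_right _ _
    have h2 := v.2.isLt
    have h3 := n_le v.1
    unfold theta
    omega
  set c := col k n t K with hc
  have hcol_lt : ∀ e, c e < 2 := by
    refine Sym2.ind ?_
    intro u v
    rw [hc, col_mk]
    unfold emm
    split_ifs <;> omega
  have hRC : RainbowConnected G c := by
    intro u v
    by_cases huv : u = v
    · subst huv
      exact ⟨Walk.nil, Walk.IsPath.nil, by simp⟩
    by_cases hij : u.1 = v.1
    swap
    · -- different parts: single edge
      have h : G.Adj u v := (hadj u v).mpr hij
      refine ⟨Walk.cons h Walk.nil, ?_, by simp⟩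
      exact Walk.IsPath.nil.cons (by simp [huv])
    · obtain ⟨i, a⟩ := u
      obtain ⟨j, b⟩ := v
      dsimp at hij
      subst hij
      have hab : a ≠ b := fun h => huv (by rw [h])
      have habv : a.val ≠ b.val := fun h => hab (Fin.ext h)
      by_cases hiK : i = K
      · subst hiK
        -- both in the big part
        have hx : min a.val b.val < t := lt_of_le_of_lt (min_le_left _ _) a.isLt
        obtain ⟨i', hi', a', ha', hθ⟩ := cover_aux (ff k n) (k - 1) (min a.val b.val) t hx
          (le_of_lt hs)
        have hi'k : i' < k := by omega
        have hffi : ff k n i' = n ⟨i', hi'k⟩ := dif_pos hi'k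
        set w : Σ i : Fin k, Fin (n i) := ⟨⟨i', hi'k⟩, ⟨a', by omega⟩⟩ with hw
        have hwK : w.1 ≠ K := by
          simp only [hw, hK]
          intro hcon
          have := Fin.mk.injEq i' hi'k (k-1) hk1 ▸ hcon
          omega
        have hθw : theta k n t w = min a.val b.val := by
          unfold theta
          rw [hw]
          dsimp
          rw [← hffi]
          exact hθ
        have h1 : G.Adj ⟨K, a⟩ w := (hadj _ _).mpr (fun h => hwK h.symm)
        have h2 : G.Adj w ⟨K, b⟩ := (hadj _ _).mpr hwK
        refine two_path c h1 h2 (fun h => huv h) ?_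
        rw [hc, col_mk, col_mk]
        simp only [if_pos rfl, if_neg hwK]
        unfold emm
        rw [hθw]
        split_ifs <;> omega
      · -- both in a small part
        have hθne : theta k n t ⟨i, a⟩ ≠ theta k n t ⟨i, b⟩ := by
          unfold theta
          dsimp
          omega
        set m := max (theta k n t ⟨i, a⟩) (theta k n t ⟨i, b⟩) with hm
        have hmt : m < t := max_lt (theta_lt _) (theta_lt _)
        have hA : theta k n t ⟨i, a⟩ ≤ m := le_max_left _ _
        have hB : theta k n t ⟨i, b⟩ ≤ m := le_max_right _ _
        have hchoice : m = theta k n t ⟨i, a⟩ ∨ m = theta k n t ⟨i, b⟩ := max_choice _ _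
        set w : Σ i : Fin k, Fin (n i) := ⟨K, ⟨m, htdef ▸ hmt⟩⟩ with hw
        have h1 : G.Adj ⟨i, a⟩ w := (hadj _ _).mpr hiK
        have h2 : G.Adj w ⟨i, b⟩ := (hadj _ _).mpr (fun h => hiK h.symm)
        have hw1 : w.1 = K := rfl
        have hw2 : (w.2 : ℕ) = m := rfl
        refine two_path c h1 h2 (fun h => huv h) ?_
        rw [hc, col_mk, col_mk]
        dsimp only
        rw [if_neg hiK, if_pos hw1, if_pos hw1, if_neg hiK]
        unfold emm
        split_ifs <;> omega
  apply le_antisymm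
  · exact Nat.sInf_le ⟨c, fun e _ => hcol_lt e, hRC⟩
  · refine le_csInf ⟨2, c, fun e _ => hcol_lt e, hRC⟩ ?_
    rintro m ⟨c', hlt', hrc'⟩
    set x0 : Σ i : Fin k, Fin (n i) := ⟨K, ⟨0, by omega⟩⟩ with hx0
    set x1 : Σ i : Fin k, Fin (n i) := ⟨K, ⟨1, by omega⟩⟩ with hx1
    obtain ⟨p, hp, hnd⟩ := hrc' x0 x1
    have hne : x0 ≠ x1 := by
      simp [hx0, hx1]
    have hnadj : ¬ G.Adj x0 x1 := fun h => (hadj x0 x1).mp h rfl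
    obtain ⟨a, b, l, hedges, ha1, ha2⟩ := first_two_edges p hne hnadj
    have hc1 := hlt' _ ((G.mem_edgeSet).mpr ha1)
    have hc2 := hlt' _ ((G.mem_edgeSet).mpr ha2)
    rw [hedges] at hnd
    simp only [List.map_cons, List.nodup_cons, List.mem_cons] at hnd
    have : c' s(x0, a) ≠ c' s(a, b) := fun h => hnd.1 (Or.inl h)
    omega
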